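/- For a set S of prime numbers, let F_S be the subfield of ℝ generated over ℚ by the real square roots √p for p ∈ S. Then for any sets S and T of prime numbers, F_S and F_T are isomorphic as fields if and only if S = T. -/

import Mathlib

open IntermediateField

/-- The quadratic extension `K(s)` where `s*s ∈ K`, realized explicitly as
`{a + b*s : a b ∈ K}`. -/
noncomputable def quadExt (K : IntermediateField ℚ ℝ) (s : ℝ) (hsq : s * s ∈ K) (hs : s ∉ K) :
    IntermediateField ℚ ℝ :=
  Subalgebra.toIntermediateField
    { carrier := {x : ℝ | ∃ a ∈ K, ∃ b ∈ K, x = a + b * s}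
      mul_mem' := by
        rintro x y ⟨a1, ha1, b1, hb1, rfl⟩ ⟨a2, ha2, b2, hb2, rfl⟩
        exact ⟨a1 * a2 + b1 * b2 * (s * s), add_mem (mul_mem ha1 ha2)
          (mul_mem (mul_mem hb1 hb2) hsq), a1 * b2 + b1 * a2,
          add_mem (mul_mem ha1 hb2) (mul_mem hb1 ha2), by ring⟩
      one_mem' := ⟨1, one_mem K, 0, zero_mem K, by ring⟩
      add_mem' := by
        rintro x y ⟨a1, ha1, b1, hb1, rfl⟩ ⟨a2, ha2, b2, hb2, rfl⟩
        exact ⟨a1 + a2, add_mem ha1 ha2, b1 + b2, add_mem hb1 hb2, by ring⟩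
      zero_mem' := ⟨0, zero_mem K, 0, zero_mem K, by ring⟩
      algebraMap_mem' := fun r =>
        ⟨algebraMap ℚ ℝ r, K.algebraMap_mem r, 0, zero_mem K, by ring⟩ }
    (by
      rintro x ⟨a, ha, b, hb, rfl⟩
      by_cases hb0 : b = 0
      · subst hb0
        refine ⟨a⁻¹, inv_mem ha, 0, zero_mem K, ?_⟩
        rw [mul_comm]; ring_nf
      · have hx0 : a + b * s ≠ 0 := by
          intro h
          apply hs
          have hsv : s = -a * b⁻¹ := by field_simp; linarith [h]
          rw [hsv]; exact mul_mem (neg_mem ha) (inv_mem hb)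
        have hd0 : a * a - b * b * (s * s) ≠ 0 := by
          intro h
          have h2 : a * a = (b * s) * (b * s) := by ring_nf; linarith [h]
          rcases mul_self_eq_mul_self_iff.mp h2 with h3 | h3
          · apply hs
            have hsv : s = a * b⁻¹ := by field_simp; linarith [h3]
            rw [hsv]; exact mul_mem ha (inv_mem hb)
          · apply hs
            have hsv : s = -a * b⁻¹ := by field_simp; linarith [h3]
            rw [hsv]; exact mul_mem (neg_mem ha) (inv_mem hb)
        refine ⟨a * (a * a - b * b * (s * s))⁻¹,
          mul_mem ha (inv_mem (sub_mem (mul_mem ha ha) (mul_mem (mul_mem hb hb) hsq))),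
          -(b * (a * a - b * b * (s * s))⁻¹),
          neg_mem (mul_mem hb (inv_mem (sub_mem (mul_mem ha ha) (mul_mem (mul_mem hb hb) hsq)))),
          ?_⟩
        field_simp
        ring_nf
        rw [← sub_mul, mul_inv_cancel₀ (by ring_nf at hd0; exact hd0)])

lemma mem_quadExt (K : IntermediateField ℚ ℝ) (s : ℝ) (hsq : s * s ∈ K) (hs : s ∉ K) (x : ℝ) :
    x ∈ quadExt K s hsq hs ↔ ∃ a ∈ K, ∃ b ∈ K, x = a + b * s := Iff.rfl

/-- Key lemma: if `Q` is a finite set of primes and `m > 1` is squarefree with no prime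
factor in `Q`, then `√m ∉ ℚ(√q : q ∈ Q)`. -/
lemma sqrt_not_mem (Q : Finset ℕ) (hQ : ∀ q ∈ Q, Nat.Prime q) (m : ℕ) (hm : Squarefree m)
    (hm1 : 1 < m) (hd : ∀ q ∈ Q, ¬ q ∣ m) :
    Real.sqrt m ∉ IntermediateField.adjoin ℚ {x : ℝ | ∃ q ∈ Q, x = Real.sqrt q} := by
  classical
  revert hQ m
  induction Q using Finset.induction with
  | empty =>
    intro hQ m hm hm1 hd hmem
    have hset : {x : ℝ | ∃ q ∈ (∅ : Finset ℕ), x = Real.sqrt q} = (∅ : Set ℝ) := by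
      ext x; simp
    rw [hset, IntermediateField.adjoin_empty, IntermediateField.mem_bot] at hmem
    obtain ⟨r, hr⟩ := hmem
    have hirr : Irrational (Real.sqrt m) := by
      rw [irrational_sqrt_natCast_iff]
      rintro ⟨k, hk⟩
      have hk1 : k = 1 := Nat.isUnit_iff.mp (hm k (by rw [hk]))
      subst hk1
      omega
    exact hirr ⟨r, hr⟩
  | @insert q Q' hq IH =>
    intro hQ m hm hm1 hd
    have hqp : Nat.Prime q := hQ q (Finset.mem_insert_self q Q')
    have hQ' : ∀ r ∈ Q', Nat.Prime r := fun r hr => hQ r (Finset.mem_insert_of_mem hr)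
    set K := IntermediateField.adjoin ℚ {x : ℝ | ∃ r ∈ Q', x = Real.sqrt r} with hKdef
    set s := Real.sqrt q with hsdef
    have hsK : s ∉ K := by
      apply IH hQ' q hqp.squarefree hqp.one_lt
      intro r hr hrq
      exact hq (((Nat.prime_dvd_prime_iff_eq (hQ' r hr) hqp).mp hrq) ▸ hr)
    have hss : s * s = (q : ℝ) := Real.mul_self_sqrt (by positivity)
    have hsq : s * s ∈ K := by rw [hss]; exact _root_.natCast_mem K q
    have hle : IntermediateField.adjoin ℚ {x : ℝ | ∃ r ∈ insert q Q', x = Real.sqrt r} ≤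
        quadExt K s hsq hsK := by
      rw [IntermediateField.adjoin_le_iff]
      rintro x ⟨r, hr, rfl⟩
      rcases Finset.mem_insert.mp hr with h | h
      · exact ⟨0, zero_mem K, 1, one_mem K, by rw [h]; ring⟩
      · exact ⟨Real.sqrt r, IntermediateField.subset_adjoin ℚ _ ⟨r, h, rfl⟩, 0, zero_mem K,
          by ring⟩
    intro hmem
    obtain ⟨a, ha, b, hb, hab⟩ := hle hmem
    have hmnn : (0:ℝ) ≤ (m:ℝ) := by positivity
    have hsqm : (m : ℝ) = a * a + b * b * (s * s) + (2 * a * b) * s := by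
      rw [← Real.mul_self_sqrt hmnn, hab]; ring
    by_cases hb0 : b = 0
    · apply IH hQ' m hm hm1 (fun r hr => hd r (Finset.mem_insert_of_mem hr))
      rw [hab, hb0]
      simpa using ha
    · by_cases ha0 : a = 0
      · -- √m = b * s, so √(mq) = b*q ∈ K
        have hqm : ¬ q ∣ m := hd q (Finset.mem_insert_self q Q')
        have hmq : Real.sqrt ((m * q : ℕ) : ℝ) = b * (s * s) := by
          push_cast
          rw [Real.sqrt_mul hmnn, hab, ha0, ← hsdef]
          ring
        apply IH hQ' (m * q)
        · rw [Nat.squarefree_mul_iff]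
          exact ⟨(Nat.Prime.coprime_iff_not_dvd hqp).mpr hqm |>.symm, hm, hqp.squarefree⟩
        · calc 1 < m := hm1
            _ ≤ m * q := Nat.le_mul_of_pos_right m hqp.pos
        · intro r hr hrmq
          rcases (Nat.Prime.dvd_mul (hQ' r hr)).mp hrmq with h | h
          · exact hd r (Finset.mem_insert_of_mem hr) h
          · exact hq (((Nat.prime_dvd_prime_iff_eq (hQ' r hr) hqp).mp h) ▸ hr)
        · rw [hmq]
          exact mul_mem hb hsq
      · -- a ≠ 0, b ≠ 0: s ∈ K, contradiction
        apply hsK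
        have hs_eq : s = ((m : ℝ) - a * a - b * b * (s * s)) * (2 * a * b)⁻¹ := by
          field_simp
          linarith [hsqm]
        rw [hs_eq]
        exact mul_mem (sub_mem (sub_mem (_root_.natCast_mem K m) (mul_mem ha ha))
          (mul_mem (mul_mem hb hb) hsq)) (inv_mem (mul_mem (mul_mem (by
            exact_mod_cast _root_.natCast_mem K 2) ha) hb))

lemma sqrt_mem_iff (T : Set ℕ) (hT : ∀ p ∈ T, Nat.Prime p) (p : ℕ) (hp : p.Prime) :
    Real.sqrt p ∈ IntermediateField.adjoin ℚ {x : ℝ | ∃ q ∈ T, x = Real.sqrt q} ↔ p ∈ T := by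
  classical
  constructor
  · intro hmem
    by_contra hpT
    obtain ⟨F, hFsub, hFmem⟩ := IntermediateField.exists_finset_of_mem_adjoin hmem
    set f : ℝ → ℕ := fun x => if h : ∃ q ∈ T, x = Real.sqrt q then h.choose else 0 with hf
    set Q : Finset ℕ := F.image f with hQdef
    have hQT : ∀ q ∈ Q, q ∈ T := by
      intro q hqQ
      obtain ⟨x, hxF, hxq⟩ := Finset.mem_image.mp hqQ
      have hx : ∃ r ∈ T, x = Real.sqrt r := hFsub hxF
      rw [hf] at hxq
      simp only [dif_pos hx] at hxq
      exact hxq ▸ hx.choose_spec.1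
    have hFQ : (F : Set ℝ) ⊆ {x : ℝ | ∃ q ∈ Q, x = Real.sqrt q} := by
      intro x hxF
      have hx : ∃ r ∈ T, x = Real.sqrt r := hFsub hxF
      refine ⟨f x, Finset.mem_image_of_mem f hxF, ?_⟩
      rw [hf]
      simp only [dif_pos hx]
      exact hx.choose_spec.2
    have hmem2 : Real.sqrt p ∈ IntermediateField.adjoin ℚ {x : ℝ | ∃ q ∈ Q, x = Real.sqrt q} :=
      IntermediateField.adjoin.mono ℚ _ _ hFQ hFmem
    exact sqrt_not_mem Q (fun q hq => hT q (hQT q hq)) p hp.squarefree hp.one_lt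
      (fun q hq hdvd => hpT (((Nat.prime_dvd_prime_iff_eq (hT q (hQT q hq)) hp).mp hdvd) ▸
        hQT q hq)) hmem2
  · intro hpT
    exact IntermediateField.subset_adjoin ℚ _ ⟨p, hpT, rfl⟩

lemma subset_of_iso (S T : Set ℕ) (hS : ∀ p ∈ S, p.Prime) (hT : ∀ p ∈ T, p.Prime)
    (φ : (IntermediateField.adjoin ℚ {x : ℝ | ∃ p ∈ S, x = Real.sqrt p}) ≃+*
      (IntermediateField.adjoin ℚ {x : ℝ | ∃ p ∈ T, x = Real.sqrt p})) : S ⊆ T := by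
  intro p hpS
  have hp := hS p hpS
  have h1 : Real.sqrt p ∈ IntermediateField.adjoin ℚ {x : ℝ | ∃ p ∈ S, x = Real.sqrt p} :=
    IntermediateField.subset_adjoin ℚ _ ⟨p, hpS, rfl⟩
  set x := φ ⟨Real.sqrt p, h1⟩ with hx
  have h2 : (⟨Real.sqrt p, h1⟩ : IntermediateField.adjoin ℚ {x : ℝ | ∃ p ∈ S, x = Real.sqrt p}) *
      ⟨Real.sqrt p, h1⟩ = ((p : ℕ) : _) := by
    ext
    push_cast
    exact Real.mul_self_sqrt (by positivity)
  have h3 : x * x = ((p : ℕ) : _) := by rw [hx, ← map_mul, h2, map_natCast]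
  have h4 : (x : ℝ) * (x : ℝ) = Real.sqrt p * Real.sqrt p := by
    rw [Real.mul_self_sqrt (by positivity : (0:ℝ) ≤ (p:ℝ))]
    exact_mod_cast congrArg (Subtype.val) h3
  have h5 : Real.sqrt p ∈ IntermediateField.adjoin ℚ {x : ℝ | ∃ p ∈ T, x = Real.sqrt p} := by
    rcases mul_self_eq_mul_self_iff.mp h4 with h | h
    · exact h ▸ x.2
    · have : Real.sqrt p = -(x : ℝ) := by linarith [h]
      exact this ▸ neg_mem x.2
  exact (sqrt_mem_iff T hT p hp).mp h5

/-- For sets `S`, `T` of primes, the subfields `F_S = ℚ(√p : p ∈ S)` and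
`F_T = ℚ(√p : p ∈ T)` of `ℝ` are isomorphic as fields iff `S = T`. -/
theorem stmt_16 (S T : Set ℕ) (hS : ∀ p ∈ S, p.Prime) (hT : ∀ p ∈ T, p.Prime) :
    Nonempty
        ((IntermediateField.adjoin ℚ {x : ℝ | ∃ p ∈ S, x = Real.sqrt p}) ≃+*
          (IntermediateField.adjoin ℚ {x : ℝ | ∃ p ∈ T, x = Real.sqrt p})) ↔
      S = T := by
  constructor
  · rintro ⟨φ⟩
    exact Set.Subset.antisymm (subset_of_iso S T hS hT φ) (subset_of_iso T S hT hS φ.symm)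
  · rintro rfl
    exact ⟨RingEquiv.refl _⟩
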